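/- Let C be a category with finite limits and L : C ⇄ D : R an adjunction between pointed categories with finite limits such that for some n both Ωⁿ(unit) and Ωⁿ(counit) are natural equivalences. Then the induced functor on stabilizations Sp(R) : Sp(D) → Sp(C) is an equivalence. -/

import Mathlib

open CategoryTheory Limits

/-- `n`-fold iterate of an endofunctor (playing the role of `Ωⁿ`). -/
def iterFunctor {C : Type*} [Category C] (F : C ⥤ C) : ℕ → C ⥤ C
  | 0 => 𝟭 C
  | n + 1 => iterFunctor F n ⋙ F

attribute [reducible] iterFunctor

section Aux

variable {C : Type*} [Category C]

lemma iterFunctor_add (F : C ⥤ C) (a b : ℕ) :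
    iterFunctor F (a + b) = iterFunctor F a ⋙ iterFunctor F b := by
  induction b with
  | zero => exact (Functor.comp_id _).symm
  | succ b ih =>
      show iterFunctor F (a + b) ⋙ F = _
      rw [ih]
      rfl

lemma isIso_iter_map_add (F : C ⥤ C) (a b : ℕ) {X Y : C} (f : X ⟶ Y)
    (hf : IsIso ((iterFunctor F a).map f)) : IsIso ((iterFunctor F (a + b)).map f) := by
  rw [iterFunctor_add]
  show IsIso ((iterFunctor F b).map ((iterFunctor F a).map f))
  exact inferInstance

/-- The commutation isomorphism `F ∘ Fᵏ ≅ Fᵏ ∘ F`. -/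
def iterComm (F : C ⥤ C) : ∀ k : ℕ, F ⋙ iterFunctor F k ≅ iterFunctor F k ⋙ F
  | 0 => F.rightUnitor ≪≫ F.leftUnitor.symm
  | (k+1) => Functor.isoWhiskerRight (iterComm F k) F

@[simp] lemma iterComm_zero_hom_app (F : C ⥤ C) (Z : C) :
    (iterComm F 0).hom.app Z = 𝟙 _ := by
  simp [iterComm]

lemma iterComm_succ_hom_app (F : C ⥤ C) (k : ℕ) (Z : C) :
    (iterComm F (k+1)).hom.app Z = F.map ((iterComm F k).hom.app Z) := rfl

instance iterComm_hom_app_isIso (F : C ⥤ C) (k : ℕ) (Z : C) :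
    IsIso ((iterComm F k).hom.app Z) :=
  inferInstance

end Aux

/-- The category of spectrum objects with respect to an endofunctor `Ω` (the "loop functor"):
the limit of the tower `⋯ → C → C → C` along `Ω`, modelled as sequences `X n` together with
equivalences `X n ≅ Ω (X (n+1))`. -/
structure SpectrumObj {C : Type*} [Category C] (Om : C ⥤ C) where
  pt : ℕ → C
  str : ∀ n : ℕ, pt n ≅ Om.obj (pt (n + 1))

@[ext]
structure SpectrumHom {C : Type*} [Category C] {Om : C ⥤ C} (A B : SpectrumObj Om) where
  f : ∀ n : ℕ, A.pt n ⟶ B.pt n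
  comm : ∀ n : ℕ, f n ≫ (B.str n).hom = (A.str n).hom ≫ Om.map (f (n + 1))

instance {C : Type*} [Category C] (Om : C ⥤ C) : Category (SpectrumObj Om) where
  Hom := SpectrumHom
  id A := ⟨fun _ => 𝟙 _, fun n => by simp⟩
  comp g h :=
    ⟨fun n => g.f n ≫ h.f n, fun n => by
      rw [Category.assoc, h.comm n, ← Category.assoc, g.comm n, Category.assoc,
        ← Functor.map_comp]⟩
  id_comp := by intro A B φ; apply SpectrumHom.ext; funext n; simp
  comp_id := by intro A B φ; apply SpectrumHom.ext; funext n; simp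
  assoc := by intro A B C' D' φ ψ χ; apply SpectrumHom.ext; funext n; simp

/-- The functor `Sp(R) : Sp(D) → Sp(C)` induced on spectrum objects by a functor `R : D ⥤ C`
commuting with the loop functors via `cR`. -/
def spMap {C D : Type*} [Category C] [Category D] (OmC : C ⥤ C) (OmD : D ⥤ D)
    (R : D ⥤ C) (cR : OmD ⋙ R ≅ R ⋙ OmC) : SpectrumObj OmD ⥤ SpectrumObj OmC where
  obj A :=
    { pt := fun n => R.obj (A.pt n)
      str := fun n => R.mapIso (A.str n) ≪≫ cR.app (A.pt (n + 1)) }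
  map {A B} φ :=
    { f := fun n => R.map (φ.f n)
      comm := fun n => by
        have hnat := cR.hom.naturality (φ.f (n + 1))
        simp only [Functor.comp_map] at hnat
        simp only [Iso.trans_hom, Functor.mapIso_hom, Iso.app_hom]
        rw [← Category.assoc, ← R.map_comp, φ.comm n, R.map_comp, Category.assoc, hnat,
          ← Category.assoc] }
  map_id := by intro A; apply SpectrumHom.ext; funext n; exact R.map_id _
  map_comp := by intro A B C' φ ψ; apply SpectrumHom.ext; funext n; exact R.map_comp _ _

attribute [reducible] spMap

section Spectra

variable {C : Type*} [Category C] {Om : C ⥤ C}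

/-- Iterated structure isomorphism `X m ≅ Ωᵏ X (m+k)` of a spectrum object. -/
def iterStr (X : SpectrumObj Om) : ∀ (k m : ℕ), X.pt m ≅ (iterFunctor Om k).obj (X.pt (m + k))
  | 0, _ => Iso.refl _
  | (k+1), m =>
      iterStr X k m ≪≫ (iterFunctor Om k).mapIso (X.str (m + k)) ≪≫
        (iterComm Om k).app (X.pt (m + k + 1))

lemma comm_iter {A B : SpectrumObj Om} (φ : SpectrumHom A B) (k m : ℕ) :
    φ.f m ≫ (iterStr B k m).hom =
      (iterStr A k m).hom ≫ (iterFunctor Om k).map (φ.f (m + k)) := by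
  induction k with
  | zero =>
      show φ.f m ≫ (Iso.refl _).hom = (Iso.refl _).hom ≫ (𝟭 C).map (φ.f (m + 0))
      simp
  | succ k ih =>
      show φ.f m ≫ (iterStr B k m).hom ≫ ((iterFunctor Om k).mapIso (B.str (m+k))).hom ≫
          ((iterComm Om k).app _).hom = _
      rw [← Category.assoc, ih]
      simp only [Functor.mapIso_hom, Iso.app_hom, Category.assoc]
      rw [← Category.assoc ((iterFunctor Om k).map (φ.f (m+k))), ← Functor.map_comp, φ.comm,
        Functor.map_comp]
      have hnat : (iterFunctor Om k).map (Om.map (φ.f (m+k+1))) ≫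
          (iterComm Om k).hom.app (B.pt (m+k+1)) =
          (iterComm Om k).hom.app (A.pt (m+k+1)) ≫ Om.map ((iterFunctor Om k).map (φ.f (m+k+1))) :=
        (iterComm Om k).hom.naturality (φ.f (m+k+1))
      rw [Category.assoc, hnat]
      simp only [iterStr, Iso.trans_hom, Functor.mapIso_hom, Iso.app_hom, Category.assoc]
      rfl

/-- Shift lemma: peeling the structure iso at the front. -/
lemma iterStr_shift (X : SpectrumObj Om) (k m : ℕ) :
    (X.str m).hom ≫ Om.map ((iterStr X k (m+1)).hom) =
      (iterStr X (k+1) m).hom ≫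
        eqToHom (congrArg (fun t => Om.obj ((iterFunctor Om k).obj (X.pt t)))
          (by omega : m + k + 1 = m + 1 + k)) := by
  induction k generalizing m with
  | zero =>
      simp [iterStr, iterFunctor]
  | succ k ih =>
      have h1 : m + 1 + k = m + k + 1 := by omega
      have h2 : m + 1 + (k + 1) = m + (k + 1) + 1 := by omega
      have expand : (iterStr X (k+1) (m+1)).hom =
          (iterStr X k (m+1)).hom ≫ (iterFunctor Om k).map (X.str (m+1+k)).hom ≫
            (iterComm Om k).hom.app (X.pt (m+1+k+1)) := by
        simp [iterStr]
      have fam : ∀ {i j : ℕ} (h : i = j),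
          eqToHom (congrArg (fun t => Om.obj ((iterFunctor Om k).obj (X.pt t))) h) ≫
            Om.map ((iterFunctor Om k).map (X.str j).hom ≫ (iterComm Om k).hom.app (X.pt (j+1))) =
          Om.map ((iterFunctor Om k).map (X.str i).hom ≫ (iterComm Om k).hom.app (X.pt (i+1))) ≫
            eqToHom (congrArg (fun t => Om.obj (Om.obj ((iterFunctor Om k).obj (X.pt (t+1))))) h) := by
        intro i j h; subst h; simp
      have expandm : Om.map ((iterStr X (k+1) (m+1)).hom) =
          Om.map (iterStr X k (m+1)).hom ≫
            Om.map ((iterFunctor Om k).map (X.str (m+1+k)).hom ≫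
              (iterComm Om k).hom.app (X.pt (m+1+k+1))) := by
        rw [expand]; simp
      have expand2 : (iterStr X (k+1+1) m).hom =
          (iterStr X (k+1) m).hom ≫ (iterFunctor Om (k+1)).map (X.str (m+(k+1))).hom ≫
            (iterComm Om (k+1)).hom.app (X.pt (m+(k+1)+1)) := by
        simp [iterStr]
      rw [expandm, ← Category.assoc, ih, Category.assoc, fam, expand2]
      simp only [Functor.map_comp, Category.assoc]
      rfl
      omega

end Spectra

section Spectra2

variable {C : Type*} [Category C] {Om : C ⥤ C}

/-- Build an isomorphism of spectrum objects from componentwise isomorphisms. -/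
def spectrumIso {A B : SpectrumObj Om} (e : ∀ m, A.pt m ≅ B.pt m)
    (hcomm : ∀ m, (e m).hom ≫ (B.str m).hom = (A.str m).hom ≫ Om.map ((e (m+1)).hom)) :
    A ≅ B where
  hom := ⟨fun m => (e m).hom, hcomm⟩
  inv := ⟨fun m => (e m).inv, by
    intro m
    rw [Iso.inv_comp_eq, ← Category.assoc, hcomm m, Category.assoc, ← Functor.map_comp]
    simp⟩
  hom_inv_id := by
    apply SpectrumHom.ext; funext m
    show (e m).hom ≫ (e m).inv = 𝟙 _
    simp
  inv_hom_id := by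
    apply SpectrumHom.ext; funext m
    show (e m).inv ≫ (e m).hom = 𝟙 _
    simp

end Spectra2

section Main

variable {C D : Type*} [Category C] [Category D]
variable (OmC : C ⥤ C) (OmD : D ⥤ D) (L : C ⥤ D) (R : D ⥤ C) (adj : L ⊣ R)
variable (cR : OmD ⋙ R ≅ R ⋙ OmC)

/-- The canonical comparison map `L Ω Z ⟶ Ω' L Z`. -/
def gam (Z : C) : L.obj (OmC.obj Z) ⟶ OmD.obj (L.obj Z) :=
  L.map (OmC.map (adj.unit.app Z) ≫ cR.inv.app (L.obj Z)) ≫ adj.counit.app (OmD.obj (L.obj Z))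

lemma gam_unit (Z : C) :
    adj.unit.app (OmC.obj Z) ≫ R.map (gam OmC OmD L R adj cR Z) =
      OmC.map (adj.unit.app Z) ≫ cR.inv.app (L.obj Z) := by
  have := (adj.homEquiv (OmC.obj Z) (OmD.obj (L.obj Z))).apply_symm_apply
    (OmC.map (adj.unit.app Z) ≫ cR.inv.app (L.obj Z))
  rw [Adjunction.homEquiv_counit, Adjunction.homEquiv_unit] at this
  exact this

lemma gam_natural {Z Z' : C} (f : Z ⟶ Z') :
    L.map (OmC.map f) ≫ gam OmC OmD L R adj cR Z' =
      gam OmC OmD L R adj cR Z ≫ OmD.map (L.map f) := by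
  apply (adj.homEquiv _ _).injective
  rw [Adjunction.homEquiv_naturality_left, Adjunction.homEquiv_naturality_right]
  have hg : ∀ W : C, (adj.homEquiv _ _) (gam OmC OmD L R adj cR W) =
      OmC.map (adj.unit.app W) ≫ cR.inv.app (L.obj W) := fun W => by
    rw [Adjunction.homEquiv_unit, gam_unit]
  rw [hg, hg]
  have h1 : OmC.map (R.map (L.map f)) ≫ cR.inv.app (L.obj Z') =
      cR.inv.app (L.obj Z) ≫ R.map (OmD.map (L.map f)) := by
    simpa using cR.inv.naturality (L.map f)
  have h2 : adj.unit.app Z ≫ R.map (L.map f) = f ≫ adj.unit.app Z' := by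
    simpa using (adj.unit.naturality f).symm
  calc OmC.map f ≫ OmC.map (adj.unit.app Z') ≫ cR.inv.app (L.obj Z')
      = (OmC.map (adj.unit.app Z) ≫ OmC.map (R.map (L.map f))) ≫ cR.inv.app (L.obj Z') := by
        rw [← Category.assoc, ← Functor.map_comp, ← Functor.map_comp, ← h2]
    _ = OmC.map (adj.unit.app Z) ≫ cR.inv.app (L.obj Z) ≫ R.map (OmD.map (L.map f)) := by
        rw [Category.assoc, h1]
    _ = (OmC.map (adj.unit.app Z) ≫ cR.inv.app (L.obj Z)) ≫ R.map (OmD.map (L.map f)) := by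
        rw [Category.assoc]

lemma gam_counit (Y : D) :
    L.map (cR.hom.app Y) ≫ gam OmC OmD L R adj cR (R.obj Y) ≫
        OmD.map (adj.counit.app Y) = adj.counit.app (OmD.obj Y) := by
  apply (adj.homEquiv _ _).injective
  rw [← Category.assoc, Adjunction.homEquiv_naturality_right,
    Adjunction.homEquiv_naturality_left]
  have hg : (adj.homEquiv _ _) (gam OmC OmD L R adj cR (R.obj Y)) =
      OmC.map (adj.unit.app (R.obj Y)) ≫ cR.inv.app (L.obj (R.obj Y)) := by
    rw [Adjunction.homEquiv_unit, gam_unit]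
  dsimp only [Functor.comp_obj, Functor.id_obj]
  rw [hg]
  have htri : (adj.homEquiv (R.obj (OmD.obj Y)) (OmD.obj Y)) (adj.counit.app (OmD.obj Y)) =
      𝟙 (R.obj (OmD.obj Y)) := by
    rw [Adjunction.homEquiv_unit]
    exact adj.right_triangle_components _
  rw [htri]
  have h1 : cR.inv.app (L.obj (R.obj Y)) ≫ R.map (OmD.map (adj.counit.app Y)) =
      OmC.map (R.map (adj.counit.app Y)) ≫ cR.inv.app Y := by
    simpa using (cR.inv.naturality (adj.counit.app Y)).symm
  rw [Category.assoc, Category.assoc, h1, ← Category.assoc (OmC.map (adj.unit.app (R.obj Y))),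
    ← Functor.map_comp, adj.right_triangle_components]
  simp

lemma gam_counit' (Y : D) :
    gam OmC OmD L R adj cR (R.obj Y) ≫ OmD.map (adj.counit.app Y) =
      L.map (cR.inv.app Y) ≫ adj.counit.app (OmD.obj Y) := by
  have h := gam_counit OmC OmD L R adj cR Y
  rw [← h, ← Category.assoc, ← Functor.map_comp]
  simp

/-- Iterated commutation isomorphism for `R`. -/
def cIter : ∀ k : ℕ, iterFunctor OmD k ⋙ R ≅ R ⋙ iterFunctor OmC k
  | 0 => R.leftUnitor ≪≫ R.rightUnitor.symm
  | (k+1) => Functor.isoWhiskerLeft (iterFunctor OmD k) cR ≪≫ Functor.isoWhiskerRight (cIter k) OmC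

@[simp] lemma cIter_zero_hom_app (W : D) :
    (cIter OmC OmD R cR 0).hom.app W = 𝟙 _ := by
  simp [cIter]

lemma cIter_succ_hom_app (k : ℕ) (W : D) :
    (cIter OmC OmD R cR (k+1)).hom.app W =
      cR.hom.app ((iterFunctor OmD k).obj W) ≫ OmC.map ((cIter OmC OmD R cR k).hom.app W) := by
  simp [cIter]

instance cIter_hom_app_isIso (k : ℕ) (W : D) :
    IsIso ((cIter OmC OmD R cR k).hom.app W) := inferInstance

lemma cSw (k : ℕ) (W : D) :
    R.map ((iterComm OmD k).hom.app W) ≫ (cIter OmC OmD R cR (k+1)).hom.app W =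
      (cIter OmC OmD R cR k).hom.app (OmD.obj W) ≫
        (iterFunctor OmC k).map (cR.hom.app W) ≫ (iterComm OmC k).hom.app (R.obj W) := by
  induction k with
  | zero =>
      rw [cIter_succ_hom_app]
      simp
  | succ k ih =>
      rw [iterComm_succ_hom_app OmD k W, cIter_succ_hom_app OmC OmD R cR (k+1) W,
        cIter_succ_hom_app OmC OmD R cR k (OmD.obj W), iterComm_succ_hom_app OmC k (R.obj W)]
      have step1 : R.map (OmD.map ((iterComm OmD k).hom.app W)) ≫
          cR.hom.app ((iterFunctor OmD (k+1)).obj W) =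
          cR.hom.app ((iterFunctor OmD k).obj (OmD.obj W)) ≫
            OmC.map (R.map ((iterComm OmD k).hom.app W)) := by
        simpa using cR.hom.naturality ((iterComm OmD k).hom.app W)
      rw [← Category.assoc, step1, Category.assoc, ← Functor.map_comp, ih]
      simp only [Functor.map_comp, Category.assoc]
      rfl

lemma spMap_iterStr (A : SpectrumObj OmD) (k m : ℕ) :
    (iterStr ((spMap OmC OmD R cR).obj A) k m).hom =
      R.map ((iterStr A k m).hom) ≫ (cIter OmC OmD R cR k).hom.app (A.pt (m+k)) := by
  induction k with
  | zero =>
      simp [iterStr]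
  | succ k ih =>
      have expand : (iterStr ((spMap OmC OmD R cR).obj A) (k+1) m).hom =
          (iterStr ((spMap OmC OmD R cR).obj A) k m).hom ≫
            (iterFunctor OmC k).map (R.map ((A.str (m+k)).hom) ≫ cR.hom.app (A.pt (m+k+1))) ≫
            (iterComm OmC k).hom.app (R.obj (A.pt (m+k+1))) := by
        simp [iterStr, spMap]
      have expand2 : (iterStr A (k+1) m).hom = (iterStr A k m).hom ≫
          (iterFunctor OmD k).map (A.str (m+k)).hom ≫
            (iterComm OmD k).hom.app (A.pt (m+k+1)) := by
        simp [iterStr]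
      have nat : R.map ((iterFunctor OmD k).map (A.str (m+k)).hom) ≫
          (cIter OmC OmD R cR k).hom.app (OmD.obj (A.pt (m+k+1))) =
          (cIter OmC OmD R cR k).hom.app (A.pt (m+k)) ≫
            (iterFunctor OmC k).map (R.map (A.str (m+k)).hom) := by
        simpa using (cIter OmC OmD R cR k).hom.naturality (A.str (m+k)).hom
      rw [expand, ih, expand2]
      simp only [Functor.map_comp, Category.assoc]
      simp only [Nat.add_succ]
      rw [cSw OmC OmD R cR k (A.pt (m+k+1)), ← Category.assoc
        (R.map ((iterFunctor OmD k).map (A.str (m+k)).hom)), nat]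
      simp only [Category.assoc]

lemma isIso_iter_of_isIso_R (N : ℕ)
    (hε : ∀ Y : D, IsIso ((iterFunctor OmD N).map (adj.counit.app Y)))
    {Y Y' : D} (f : Y ⟶ Y') (hf : IsIso (R.map f)) :
    IsIso ((iterFunctor OmD N).map f) := by
  haveI := hε Y; haveI := hε Y'; haveI := hf
  have hnat : (iterFunctor OmD N).map (adj.counit.app Y) ≫ (iterFunctor OmD N).map f =
      (iterFunctor OmD N).map (L.map (R.map f)) ≫
        (iterFunctor OmD N).map (adj.counit.app Y') := by
    rw [← Functor.map_comp, ← Functor.map_comp]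
    congr 1
    simpa using (adj.counit.naturality f).symm
  have heq : (iterFunctor OmD N).map f =
      inv ((iterFunctor OmD N).map (adj.counit.app Y)) ≫
        (iterFunctor OmD N).map (L.map (R.map f)) ≫
          (iterFunctor OmD N).map (adj.counit.app Y') := by
    rw [← hnat, IsIso.inv_hom_id_assoc]
  rw [heq]
  infer_instance

lemma isIso_iter_gam (n : ℕ)
    (hη : ∀ X : C, IsIso ((iterFunctor OmC n).map (adj.unit.app X)))
    (hε : ∀ Y : D, IsIso ((iterFunctor OmD n).map (adj.counit.app Y)))
    (Z : C) : IsIso ((iterFunctor OmD (n+n)).map (gam OmC OmD L R adj cR Z)) := by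
  -- `Ωⁿ(Ω η) ` is iso
  haveI h1 : IsIso ((iterFunctor OmC n).map (OmC.map (adj.unit.app Z))) := by
    have : IsIso ((OmC ⋙ iterFunctor OmC n).map (adj.unit.app Z)) := by
      rw [NatIso.isIso_map_iff (iterComm OmC n) (adj.unit.app Z)]
      show IsIso (OmC.map ((iterFunctor OmC n).map (adj.unit.app Z)))
      haveI := hη Z
      infer_instance
    exact this
  -- from gam_unit, `Ωⁿ (R γ)` is iso
  haveI h2 : IsIso ((iterFunctor OmC n).map (R.map (gam OmC OmD L R adj cR Z))) := by
    have hu := congrArg (iterFunctor OmC n).map (gam_unit OmC OmD L R adj cR Z)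
    rw [Functor.map_comp, Functor.map_comp] at hu
    haveI := hη (OmC.obj Z)
    have : (iterFunctor OmC n).map (R.map (gam OmC OmD L R adj cR Z)) =
        inv ((iterFunctor OmC n).map (adj.unit.app (OmC.obj Z))) ≫
          (iterFunctor OmC n).map (OmC.map (adj.unit.app Z)) ≫
            (iterFunctor OmC n).map (cR.inv.app (L.obj Z)) := by
      rw [← hu, IsIso.inv_hom_id_assoc]
    rw [this]
    infer_instance
  -- hence `R (Ωⁿ γ)` is iso
  haveI h3 : IsIso (R.map ((iterFunctor OmD n).map (gam OmC OmD L R adj cR Z))) := by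
    have : IsIso ((iterFunctor OmD n ⋙ R).map (gam OmC OmD L R adj cR Z)) := by
      rw [NatIso.isIso_map_iff (cIter OmC OmD R cR n) (gam OmC OmD L R adj cR Z)]
      show IsIso ((iterFunctor OmC n).map (R.map (gam OmC OmD L R adj cR Z)))
      infer_instance
    exact this
  -- conclude
  have h4 : IsIso ((iterFunctor OmD n).map
      ((iterFunctor OmD n).map (gam OmC OmD L R adj cR Z))) :=
    isIso_iter_of_isIso_R (OmD := OmD) (L := L) (R := R) (adj := adj) (N := n) hε _ h3
  rw [iterFunctor_add]
  exact h4

lemma spMap_faithful (N : ℕ)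
    (hε : ∀ Y : D, IsIso ((iterFunctor OmD N).map (adj.counit.app Y))) :
    (spMap OmC OmD R cR).Faithful := by
  refine ⟨fun {A B} φ ψ h => ?_⟩
  have hR : ∀ m, R.map (SpectrumHom.f φ m) = R.map (SpectrumHom.f ψ m) := fun m =>
    congrFun (congrArg SpectrumHom.f h) m
  have hTD : ∀ m, (iterFunctor OmD N).map (SpectrumHom.f φ m) =
      (iterFunctor OmD N).map (SpectrumHom.f ψ m) := by
    intro m
    haveI := hε (A.pt m); haveI := hε (B.pt m)
    have key : ∀ (χ : SpectrumHom A B), (iterFunctor OmD N).map (SpectrumHom.f χ m) =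
        inv ((iterFunctor OmD N).map (adj.counit.app (A.pt m))) ≫
          (iterFunctor OmD N).map (L.map (R.map (SpectrumHom.f χ m))) ≫
            (iterFunctor OmD N).map (adj.counit.app (B.pt m)) := by
      intro χ
      have hnat : (iterFunctor OmD N).map (adj.counit.app (A.pt m)) ≫
          (iterFunctor OmD N).map (SpectrumHom.f χ m) =
          (iterFunctor OmD N).map (L.map (R.map (SpectrumHom.f χ m))) ≫
            (iterFunctor OmD N).map (adj.counit.app (B.pt m)) := by
        rw [← Functor.map_comp, ← Functor.map_comp]
        congr 1
        simpa using (adj.counit.naturality (SpectrumHom.f χ m)).symm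
      rw [← hnat, IsIso.inv_hom_id_assoc]
    rw [key φ, key ψ, hR m]
  apply SpectrumHom.ext
  funext m
  have kφ : SpectrumHom.f φ m = (iterStr A N m).hom ≫
      (iterFunctor OmD N).map (SpectrumHom.f φ (m+N)) ≫ (iterStr B N m).inv := by
    rw [← Category.assoc, ← comm_iter φ N m]
    simp
  have kψ : SpectrumHom.f ψ m = (iterStr A N m).hom ≫
      (iterFunctor OmD N).map (SpectrumHom.f ψ (m+N)) ≫ (iterStr B N m).inv := by
    rw [← Category.assoc, ← comm_iter ψ N m]
    simp
  rw [kφ, kψ, hTD (m+N)]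

/-- Middle conjugated map used in the fullness proof. -/
noncomputable def midMap (N : ℕ)
    (hε : ∀ Y : D, IsIso ((iterFunctor OmD N).map (adj.counit.app Y)))
    {A B : SpectrumObj OmD}
    (ψ : SpectrumHom ((spMap OmC OmD R cR).obj A) ((spMap OmC OmD R cR).obj B)) (j : ℕ) :
    (iterFunctor OmD N).obj (A.pt j) ⟶ (iterFunctor OmD N).obj (B.pt j) :=
  haveI := hε (A.pt j)
  inv ((iterFunctor OmD N).map (adj.counit.app (A.pt j))) ≫
    (iterFunctor OmD N).map (L.map (SpectrumHom.f ψ j) ≫ adj.counit.app (B.pt j))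

lemma keyGam (N : ℕ)
    (hε : ∀ Y : D, IsIso ((iterFunctor OmD N).map (adj.counit.app Y)))
    (Y Y' : D) (θ : R.obj Y ⟶ R.obj Y') :
    (iterFunctor OmD N).map (L.map (cR.hom.app Y ≫ OmC.map θ ≫ cR.inv.app Y') ≫
        adj.counit.app (OmD.obj Y')) ≫ (iterComm OmD N).hom.app Y' =
    (iterFunctor OmD N).map (adj.counit.app (OmD.obj Y)) ≫ (iterComm OmD N).hom.app Y ≫
      OmD.map ((haveI := hε Y
        inv ((iterFunctor OmD N).map (adj.counit.app Y))) ≫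
          (iterFunctor OmD N).map (L.map θ ≫ adj.counit.app Y')) := by
  haveI := hε Y
  haveI hom' : IsIso ((iterFunctor OmD N).map (OmD.map (adj.counit.app Y))) := by
    have : IsIso ((OmD ⋙ iterFunctor OmD N).map (adj.counit.app Y)) := by
      rw [NatIso.isIso_map_iff (iterComm OmD N) (adj.counit.app Y)]
      show IsIso (OmD.map ((iterFunctor OmD N).map (adj.counit.app Y)))
      infer_instance
    exact this
  -- base identity
  have base : L.map (cR.hom.app Y ≫ OmC.map θ ≫ cR.inv.app Y') ≫ adj.counit.app (OmD.obj Y') =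
      (L.map (cR.hom.app Y) ≫ gam OmC OmD L R adj cR (R.obj Y)) ≫
        OmD.map (L.map θ ≫ adj.counit.app Y') := by
    symm
    rw [OmD.map_comp, Category.assoc]
    rw [← Category.assoc (gam OmC OmD L R adj cR (R.obj Y)) (OmD.map (L.map θ)),
      ← gam_natural OmC OmD L R adj cR θ, Category.assoc,
      gam_counit' OmC OmD L R adj cR Y']
    simp [Functor.map_comp]
  -- `TD p ≫ TD(Ω' ε_Y) = TD ε_{Ω'Y}`
  have hp : (iterFunctor OmD N).map (adj.counit.app (OmD.obj Y)) =
      (iterFunctor OmD N).map (L.map (cR.hom.app Y) ≫ gam OmC OmD L R adj cR (R.obj Y)) ≫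
        (iterFunctor OmD N).map (OmD.map (adj.counit.app Y)) := by
    rw [← Functor.map_comp]
    congr 1
    rw [Category.assoc, ← gam_counit OmC OmD L R adj cR Y]
  have swnat_ε : (iterFunctor OmD N).map (OmD.map (adj.counit.app Y)) ≫
      (iterComm OmD N).hom.app Y =
      (iterComm OmD N).hom.app (L.obj (R.obj Y)) ≫
        OmD.map ((iterFunctor OmD N).map (adj.counit.app Y)) := by
    simpa using (iterComm OmD N).hom.naturality (adj.counit.app Y)
  have swnat_g : (iterFunctor OmD N).map (OmD.map (L.map θ ≫ adj.counit.app Y')) ≫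
      (iterComm OmD N).hom.app Y' =
      (iterComm OmD N).hom.app (L.obj (R.obj Y)) ≫
        OmD.map ((iterFunctor OmD N).map (L.map θ ≫ adj.counit.app Y')) := by
    simpa using (iterComm OmD N).hom.naturality (L.map θ ≫ adj.counit.app Y')
  have tailEq : (iterFunctor OmD N).map (OmD.map (L.map θ ≫ adj.counit.app Y')) ≫
      (iterComm OmD N).hom.app Y' =
      (iterFunctor OmD N).map (OmD.map (adj.counit.app Y)) ≫ (iterComm OmD N).hom.app Y ≫
        OmD.map (inv ((iterFunctor OmD N).map (adj.counit.app Y)) ≫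
          (iterFunctor OmD N).map (L.map θ ≫ adj.counit.app Y')) := by
    symm
    rw [OmD.map_comp, ← Category.assoc, swnat_ε]
    simp only [Category.assoc, ← OmD.map_comp, IsIso.hom_inv_id_assoc]
    rw [swnat_g]
  rw [base, Functor.map_comp, Category.assoc, hp, tailEq]
  simp only [Category.assoc]

lemma midMap_comm (N : ℕ)
    (hε : ∀ Y : D, IsIso ((iterFunctor OmD N).map (adj.counit.app Y)))
    {A B : SpectrumObj OmD}
    (ψ : SpectrumHom ((spMap OmC OmD R cR).obj A) ((spMap OmC OmD R cR).obj B)) (j : ℕ) :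
    midMap OmC OmD L R adj cR N hε ψ j ≫ (iterFunctor OmD N).map ((B.str j).hom) ≫
        (iterComm OmD N).hom.app (B.pt (j+1)) =
      (iterFunctor OmD N).map ((A.str j).hom) ≫ (iterComm OmD N).hom.app (A.pt (j+1)) ≫
        OmD.map (midMap OmC OmD L R adj cR N hε ψ (j+1)) := by
  haveI := hε (A.pt j)
  rw [← cancel_epi ((iterFunctor OmD N).map (adj.counit.app (A.pt j)))]
  have hstart : (iterFunctor OmD N).map (adj.counit.app (A.pt j)) ≫
      midMap OmC OmD L R adj cR N hε ψ j =
      (iterFunctor OmD N).map (L.map (SpectrumHom.f ψ j) ≫ adj.counit.app (B.pt j)) := by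
    dsimp only [midMap]
    rw [IsIso.hom_inv_id_assoc]
  rw [← Category.assoc, hstart]
  -- base manipulations
  have hb : adj.counit.app (B.pt j) ≫ (B.str j).hom =
      L.map (R.map ((B.str j).hom)) ≫ adj.counit.app (OmD.obj (B.pt (j+1))) := by
    simpa using (adj.counit.naturality ((B.str j).hom)).symm
  have ha : adj.counit.app (A.pt j) ≫ (A.str j).hom =
      L.map (R.map ((A.str j).hom)) ≫ adj.counit.app (OmD.obj (A.pt (j+1))) := by
    simpa using (adj.counit.naturality ((A.str j).hom)).symm
  have hpsi : SpectrumHom.f ψ j ≫ R.map ((B.str j).hom) =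
      R.map ((A.str j).hom) ≫ cR.hom.app (A.pt (j+1)) ≫ OmC.map (SpectrumHom.f ψ (j+1)) ≫
        cR.inv.app (B.pt (j+1)) := by
    have h := ψ.comm j
    have hB : ((((spMap OmC OmD R cR).obj B)).str j).hom =
        R.map ((B.str j).hom) ≫ cR.hom.app (B.pt (j+1)) := rfl
    have hA : ((((spMap OmC OmD R cR).obj A)).str j).hom =
        R.map ((A.str j).hom) ≫ cR.hom.app (A.pt (j+1)) := rfl
    rw [hB, hA] at h
    have h2 := congrArg (fun t => t ≫ cR.inv.app (B.pt (j+1))) h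
    simp only [Category.assoc, Iso.hom_inv_id_app, Functor.comp_obj, Category.comp_id] at h2
    exact h2
  have lhs1 : (iterFunctor OmD N).map (L.map (SpectrumHom.f ψ j) ≫ adj.counit.app (B.pt j)) ≫
      (iterFunctor OmD N).map ((B.str j).hom) =
      (iterFunctor OmD N).map (L.map (R.map ((A.str j).hom))) ≫
        (iterFunctor OmD N).map
          (L.map (cR.hom.app (A.pt (j+1)) ≫ OmC.map (SpectrumHom.f ψ (j+1)) ≫
            cR.inv.app (B.pt (j+1))) ≫ adj.counit.app (OmD.obj (B.pt (j+1)))) := by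
    rw [← Functor.map_comp, ← Functor.map_comp]
    congr 1
    rw [Category.assoc, hb, ← Category.assoc, ← L.map_comp, hpsi]
    simp [Functor.map_comp, Category.assoc]
  have rhs1 : (iterFunctor OmD N).map (adj.counit.app (A.pt j)) ≫
      (iterFunctor OmD N).map ((A.str j).hom) =
      (iterFunctor OmD N).map (L.map (R.map ((A.str j).hom))) ≫
        (iterFunctor OmD N).map (adj.counit.app (OmD.obj (A.pt (j+1)))) := by
    rw [← Functor.map_comp, ← Functor.map_comp, ha]
  rw [← Category.assoc, lhs1,
    ← Category.assoc ((iterFunctor OmD N).map (adj.counit.app (A.pt j))), rhs1]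
  simp only [Category.assoc]
  rw [keyGam OmC OmD L R adj cR N hε (A.pt (j+1)) (B.pt (j+1)) (SpectrumHom.f ψ (j+1))]
  rfl

lemma midMap_R (N : ℕ)
    (hη : ∀ X : C, IsIso ((iterFunctor OmC N).map (adj.unit.app X)))
    (hε : ∀ Y : D, IsIso ((iterFunctor OmD N).map (adj.counit.app Y)))
    {A B : SpectrumObj OmD}
    (ψ : SpectrumHom ((spMap OmC OmD R cR).obj A) ((spMap OmC OmD R cR).obj B)) (j : ℕ) :
    R.map (midMap OmC OmD L R adj cR N hε ψ j) ≫ (cIter OmC OmD R cR N).hom.app (B.pt j) =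
      (cIter OmC OmD R cR N).hom.app (A.pt j) ≫
        (iterFunctor OmC N).map (SpectrumHom.f ψ j) := by
  haveI := hε (A.pt j)
  haveI := hη (R.obj (A.pt j))
  have n1 : R.map ((iterFunctor OmD N).map (adj.counit.app (A.pt j))) ≫
      (cIter OmC OmD R cR N).hom.app (A.pt j) =
      (cIter OmC OmD R cR N).hom.app (L.obj (R.obj (A.pt j))) ≫
        (iterFunctor OmC N).map (R.map (adj.counit.app (A.pt j))) := by
    simpa using (cIter OmC OmD R cR N).hom.naturality (adj.counit.app (A.pt j))
  have n2 : R.map ((iterFunctor OmD N).map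
        (L.map (SpectrumHom.f ψ j) ≫ adj.counit.app (B.pt j))) ≫
      (cIter OmC OmD R cR N).hom.app (B.pt j) =
      (cIter OmC OmD R cR N).hom.app (L.obj (R.obj (A.pt j))) ≫
        (iterFunctor OmC N).map
          (R.map (L.map (SpectrumHom.f ψ j) ≫ adj.counit.app (B.pt j))) := by
    simpa using (cIter OmC OmD R cR N).hom.naturality
      (L.map (SpectrumHom.f ψ j) ≫ adj.counit.app (B.pt j))
  have tri : (iterFunctor OmC N).map (adj.unit.app (R.obj (A.pt j))) ≫
      (iterFunctor OmC N).map (R.map (adj.counit.app (A.pt j))) = 𝟙 _ := by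
    rw [← Functor.map_comp, adj.right_triangle_components]
    simp
  have expand : R.map (midMap OmC OmD L R adj cR N hε ψ j) =
      inv (R.map ((iterFunctor OmD N).map (adj.counit.app (A.pt j)))) ≫
        R.map ((iterFunctor OmD N).map
          (L.map (SpectrumHom.f ψ j) ≫ adj.counit.app (B.pt j))) := by
    dsimp only [midMap]
    rw [Functor.map_comp, Functor.map_inv]
  rw [expand, Category.assoc, n2, IsIso.inv_comp_eq, ← Category.assoc, n1]
  simp only [Category.assoc]
  rw [cancel_epi]
  rw [← cancel_epi ((iterFunctor OmC N).map (adj.unit.app (R.obj (A.pt j)))),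
    ← Category.assoc, tri, Category.id_comp, ← Functor.map_comp]
  congr 1
  have hun : adj.unit.app (R.obj (A.pt j)) ≫ R.map (L.map (SpectrumHom.f ψ j)) =
      SpectrumHom.f ψ j ≫ adj.unit.app (R.obj (B.pt j)) :=
    (adj.unit.naturality (SpectrumHom.f ψ j)).symm
  rw [R.map_comp, ← Category.assoc, hun, Category.assoc, adj.right_triangle_components]
  exact Category.comp_id _

lemma spMap_full (N : ℕ)
    (hη : ∀ X : C, IsIso ((iterFunctor OmC N).map (adj.unit.app X)))
    (hε : ∀ Y : D, IsIso ((iterFunctor OmD N).map (adj.counit.app Y))) :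
    (spMap OmC OmD R cR).Full := by
  constructor
  intro A B ψ
  refine ⟨⟨fun m => (iterStr A N m).hom ≫ midMap OmC OmD L R adj cR N hε ψ (m+N) ≫
    (iterStr B N m).inv, ?_⟩, ?_⟩
  · intro m
    rw [← cancel_mono (OmD.map ((iterStr B N (m+1)).hom))]
    simp only [Category.assoc]
    have sB := iterStr_shift B N m
    have sA := iterStr_shift A N m
    have eB : (iterStr B (N+1) m).hom = (iterStr B N m).hom ≫
        (iterFunctor OmD N).map ((B.str (m+N)).hom) ≫
          (iterComm OmD N).hom.app (B.pt (m+N+1)) := by simp [iterStr]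
    have eA : (iterStr A (N+1) m).hom = (iterStr A N m).hom ≫
        (iterFunctor OmD N).map ((A.str (m+N)).hom) ≫
          (iterComm OmD N).hom.app (A.pt (m+N+1)) := by simp [iterStr]
    rw [eB] at sB
    rw [eA] at sA
    have fam : ∀ (i i' : ℕ) (h : i = i'),
        OmD.map (midMap OmC OmD L R adj cR N hε ψ i) ≫
          eqToHom (congrArg (fun t => OmD.obj ((iterFunctor OmD N).obj (B.pt t))) h) =
        eqToHom (congrArg (fun t => OmD.obj ((iterFunctor OmD N).obj (A.pt t))) h) ≫
          OmD.map (midMap OmC OmD L R adj cR N hε ψ i') := by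
      intro i i' h
      subst h
      simp
    calc (iterStr A N m).hom ≫ midMap OmC OmD L R adj cR N hε ψ (m+N) ≫
            (iterStr B N m).inv ≫ (B.str m).hom ≫ OmD.map ((iterStr B N (m+1)).hom)
        = (iterStr A N m).hom ≫ midMap OmC OmD L R adj cR N hε ψ (m+N) ≫
            (iterStr B N m).inv ≫ (iterStr B N m).hom ≫
              (iterFunctor OmD N).map ((B.str (m+N)).hom) ≫
                (iterComm OmD N).hom.app (B.pt (m+N+1)) ≫
                  eqToHom (congrArg (fun t => OmD.obj ((iterFunctor OmD N).obj (B.pt t)))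
                    (show m + N + 1 = m + 1 + N by omega)) := by
          rw [sB]
          simp only [Category.assoc]
      _ = (iterStr A N m).hom ≫ (midMap OmC OmD L R adj cR N hε ψ (m+N) ≫
              (iterFunctor OmD N).map ((B.str (m+N)).hom) ≫
                (iterComm OmD N).hom.app (B.pt (m+N+1))) ≫
                  eqToHom (congrArg (fun t => OmD.obj ((iterFunctor OmD N).obj (B.pt t)))
                    (show m + N + 1 = m + 1 + N by omega)) := by
          rw [Iso.inv_hom_id_assoc]
          simp only [Category.assoc]
      _ = (iterStr A N m).hom ≫ ((iterFunctor OmD N).map ((A.str (m+N)).hom) ≫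
              (iterComm OmD N).hom.app (A.pt (m+N+1)) ≫
                OmD.map (midMap OmC OmD L R adj cR N hε ψ (m+N+1))) ≫
                  eqToHom (congrArg (fun t => OmD.obj ((iterFunctor OmD N).obj (B.pt t)))
                    (show m + N + 1 = m + 1 + N by omega)) := by
          rw [midMap_comm OmC OmD L R adj cR N hε ψ (m+N)]
      _ = (iterStr A N m).hom ≫ (iterFunctor OmD N).map ((A.str (m+N)).hom) ≫
              (iterComm OmD N).hom.app (A.pt (m+N+1)) ≫
                eqToHom (congrArg (fun t => OmD.obj ((iterFunctor OmD N).obj (A.pt t)))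
                    (show m + N + 1 = m + 1 + N by omega)) ≫
                  OmD.map (midMap OmC OmD L R adj cR N hε ψ (m+1+N)) := by
          simp only [Category.assoc]
          rw [fam (m+N+1) (m+1+N) (show m + N + 1 = m + 1 + N by omega)]
      _ = ((A.str m).hom ≫ OmD.map ((iterStr A N (m+1)).hom)) ≫
              OmD.map (midMap OmC OmD L R adj cR N hε ψ (m+1+N)) := by
          rw [sA]
          simp only [Category.assoc]
      _ = (A.str m).hom ≫ OmD.map ((iterStr A N (m+1)).hom ≫
            midMap OmC OmD L R adj cR N hε ψ (m+1+N) ≫ (iterStr B N (m+1)).inv) ≫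
              OmD.map ((iterStr B N (m+1)).hom) := by
          simp only [Functor.map_comp, Category.assoc]
          rw [← OmD.map_comp ((iterStr B N (m+1)).inv) ((iterStr B N (m+1)).hom),
            Iso.inv_hom_id, OmD.map_id]
          rw [Category.comp_id]
  · apply SpectrumHom.ext
    funext m
    show R.map ((iterStr A N m).hom ≫ midMap OmC OmD L R adj cR N hε ψ (m+N) ≫
      (iterStr B N m).inv) = SpectrumHom.f ψ m
    have hA := spMap_iterStr OmC OmD R cR A N m
    have hB := spMap_iterStr OmC OmD R cR B N m
    have hmid := midMap_R OmC OmD L R adj cR N hη hε ψ (m+N)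
    have hci := comm_iter ψ N m
    rw [← cancel_mono ((iterStr ((spMap OmC OmD R cR).obj B) N m).hom)]
    rw [hci, hB]
    simp only [CategoryTheory.Functor.map_comp, Category.assoc]
    rw [← Category.assoc (R.map ((iterStr B N m).inv)), ← R.map_comp,
      Iso.inv_hom_id, R.map_id, Category.id_comp, hmid, hA]
    simp only [Category.assoc]

/-- Candidate preimage spectrum object for essential surjectivity. -/
noncomputable def essObj (N : ℕ)
    (hγ : ∀ Z : C, IsIso ((iterFunctor OmD N).map (gam OmC OmD L R adj cR Z)))
    (X : SpectrumObj OmC) : SpectrumObj OmD where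
  pt m := (iterFunctor OmD N).obj (L.obj (X.pt (m+N)))
  str m :=
    haveI := hγ (X.pt (m+N+1))
    (iterFunctor OmD N).mapIso (L.mapIso (X.str (m+N))) ≪≫
      asIso ((iterFunctor OmD N).map (gam OmC OmD L R adj cR (X.pt (m+N+1)))) ≪≫
      (iterComm OmD N).app (L.obj (X.pt (m+N+1))) ≪≫
      eqToIso (congrArg (fun t => OmD.obj ((iterFunctor OmD N).obj (L.obj (X.pt t))))
        (show m+N+1 = m+1+N by omega))

lemma essObj_str_hom (N : ℕ)
    (hγ : ∀ Z : C, IsIso ((iterFunctor OmD N).map (gam OmC OmD L R adj cR Z)))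
    (X : SpectrumObj OmC) (m : ℕ) :
    ((essObj OmC OmD L R adj cR N hγ X).str m).hom =
      (iterFunctor OmD N).map (L.map ((X.str (m+N)).hom)) ≫
        (iterFunctor OmD N).map (gam OmC OmD L R adj cR (X.pt (m+N+1))) ≫
          (iterComm OmD N).hom.app (L.obj (X.pt (m+N+1))) ≫
            eqToHom (congrArg (fun t => OmD.obj ((iterFunctor OmD N).obj (L.obj (X.pt t))))
              (show m+N+1 = m+1+N by omega)) := by
  simp [essObj]

lemma core (N : ℕ)
    (hη : ∀ X : C, IsIso ((iterFunctor OmC N).map (adj.unit.app X)))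
    (X : SpectrumObj OmC) (j : ℕ) :
    (cIter OmC OmD R cR N).hom.app (L.obj (X.pt j)) ≫
      inv ((iterFunctor OmC N).map (adj.unit.app (X.pt j))) ≫
        (iterFunctor OmC N).map ((X.str j).hom) ≫ (iterComm OmC N).hom.app (X.pt (j+1)) =
    R.map ((iterFunctor OmD N).map (L.map ((X.str j).hom))) ≫
      R.map ((iterFunctor OmD N).map (gam OmC OmD L R adj cR (X.pt (j+1)))) ≫
        R.map ((iterComm OmD N).hom.app (L.obj (X.pt (j+1)))) ≫
          cR.hom.app ((iterFunctor OmD N).obj (L.obj (X.pt (j+1)))) ≫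
            OmC.map ((cIter OmC OmD R cR N).hom.app (L.obj (X.pt (j+1)))) ≫
              OmC.map (inv ((iterFunctor OmC N).map (adj.unit.app (X.pt (j+1))))) := by
  haveI := hη (X.pt j)
  haveI := hη (X.pt (j+1))
  haveI hOmη : IsIso ((iterFunctor OmC N).map (OmC.map (adj.unit.app (X.pt (j+1))))) := by
    have : IsIso ((OmC ⋙ iterFunctor OmC N).map (adj.unit.app (X.pt (j+1)))) := by
      rw [NatIso.isIso_map_iff (iterComm OmC N) (adj.unit.app (X.pt (j+1)))]
      show IsIso (OmC.map ((iterFunctor OmC N).map (adj.unit.app (X.pt (j+1)))))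
      infer_instance
    exact this
  -- collapse the tail of the RHS using `cIter_succ_hom_app`
  have tail : cR.hom.app ((iterFunctor OmD N).obj (L.obj (X.pt (j+1)))) ≫
      OmC.map ((cIter OmC OmD R cR N).hom.app (L.obj (X.pt (j+1)))) =
      (cIter OmC OmD R cR (N+1)).hom.app (L.obj (X.pt (j+1))) :=
    (cIter_succ_hom_app OmC OmD R cR N (L.obj (X.pt (j+1)))).symm
  -- naturality of `cIter` at `L.map (X.str j).hom` and `gam`
  have n1 : R.map ((iterFunctor OmD N).map (L.map ((X.str j).hom))) ≫
      (cIter OmC OmD R cR N).hom.app (L.obj (OmC.obj (X.pt (j+1)))) =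
      (cIter OmC OmD R cR N).hom.app (L.obj (X.pt j)) ≫
        (iterFunctor OmC N).map (R.map (L.map ((X.str j).hom))) := by
    simpa using (cIter OmC OmD R cR N).hom.naturality (L.map ((X.str j).hom))
  have n2 : R.map ((iterFunctor OmD N).map (gam OmC OmD L R adj cR (X.pt (j+1)))) ≫
      (cIter OmC OmD R cR N).hom.app (OmD.obj (L.obj (X.pt (j+1)))) =
      (cIter OmC OmD R cR N).hom.app (L.obj (OmC.obj (X.pt (j+1)))) ≫
        (iterFunctor OmC N).map (R.map (gam OmC OmD L R adj cR (X.pt (j+1)))) := by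
    simpa using (cIter OmC OmD R cR N).hom.naturality (gam OmC OmD L R adj cR (X.pt (j+1)))
  -- naturality of `iterComm OmC N` at the unit
  have n3 : (iterFunctor OmC N).map (OmC.map (adj.unit.app (X.pt (j+1)))) ≫
      (iterComm OmC N).hom.app (R.obj (L.obj (X.pt (j+1)))) =
      (iterComm OmC N).hom.app (X.pt (j+1)) ≫
        OmC.map ((iterFunctor OmC N).map (adj.unit.app (X.pt (j+1)))) := by
    simpa using (iterComm OmC N).hom.naturality (adj.unit.app (X.pt (j+1)))
  -- base identity
  have base : adj.unit.app (X.pt j) ≫ R.map (L.map ((X.str j).hom)) ≫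
      R.map (gam OmC OmD L R adj cR (X.pt (j+1))) ≫ cR.hom.app (L.obj (X.pt (j+1))) =
      (X.str j).hom ≫ OmC.map (adj.unit.app (X.pt (j+1))) := by
    have hnat : adj.unit.app (X.pt j) ≫ R.map (L.map ((X.str j).hom)) =
        (X.str j).hom ≫ adj.unit.app (OmC.obj (X.pt (j+1))) :=
      (adj.unit.naturality ((X.str j).hom)).symm
    rw [← Category.assoc, hnat, Category.assoc, ← Category.assoc (adj.unit.app _),
      gam_unit OmC OmD L R adj cR (X.pt (j+1))]
    simp
  rw [← Category.assoc (cR.hom.app ((iterFunctor OmD N).obj (L.obj (X.pt (j+1)))))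
    (OmC.map ((cIter OmC OmD R cR N).hom.app (L.obj (X.pt (j+1))))), tail]
  rw [← Category.assoc (R.map ((iterComm OmD N).hom.app (L.obj (X.pt (j+1))))),
    cSw OmC OmD R cR N (L.obj (X.pt (j+1)))]
  simp only [Category.assoc]
  rw [← Category.assoc (R.map ((iterFunctor OmD N).map (gam OmC OmD L R adj cR (X.pt (j+1))))),
    n2]
  simp only [Category.assoc]
  rw [← Category.assoc (R.map ((iterFunctor OmD N).map (L.map ((X.str j).hom)))), n1]
  simp only [Category.assoc]
  rw [cancel_epi]
  have n3' : (iterComm OmC N).hom.app (R.obj (L.obj (X.pt (j+1)))) ≫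
      OmC.map (inv ((iterFunctor OmC N).map (adj.unit.app (X.pt (j+1))))) =
      inv ((iterFunctor OmC N).map (OmC.map (adj.unit.app (X.pt (j+1))))) ≫
        (iterComm OmC N).hom.app (X.pt (j+1)) := by
    rw [Functor.map_inv, IsIso.eq_inv_comp, ← Category.assoc, n3, Category.assoc,
      IsIso.hom_inv_id, Category.comp_id]
  rw [n3']
  rw [IsIso.inv_comp_eq, ← Category.assoc, ← Category.assoc, ← Category.assoc, ← Category.assoc,
    ← Functor.map_comp, ← Functor.map_comp, ← Functor.map_comp]
  have mapped := congrArg (iterFunctor OmC N).map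
    (show ((adj.unit.app (X.pt j) ≫ R.map (L.map ((X.str j).hom))) ≫
        R.map (gam OmC OmD L R adj cR (X.pt (j+1)))) ≫ cR.hom.app (L.obj (X.pt (j+1))) =
      (X.str j).hom ≫ OmC.map (adj.unit.app (X.pt (j+1))) by
        simpa [Category.assoc] using base)
  rw [mapped, Functor.map_comp]
  simp only [Category.assoc, IsIso.hom_inv_id_assoc]

lemma spMap_essSurj (N : ℕ)
    (hη : ∀ X : C, IsIso ((iterFunctor OmC N).map (adj.unit.app X)))
    (hγ : ∀ Z : C, IsIso ((iterFunctor OmD N).map (gam OmC OmD L R adj cR Z))) :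
    (spMap OmC OmD R cR).EssSurj := by
  constructor
  intro X
  refine ⟨essObj OmC OmD L R adj cR N hγ X, ⟨?_⟩⟩
  refine spectrumIso (fun m =>
    (cIter OmC OmD R cR N).app (L.obj (X.pt (m+N))) ≪≫
      (@asIso _ _ _ _ ((iterFunctor OmC N).map (adj.unit.app (X.pt (m+N))))
        (hη (X.pt (m+N)))).symm ≪≫
      (iterStr X N m).symm) ?_
  intro m
  haveI := hη (X.pt (m+N))
  haveI := hη (X.pt (m+1+N))
  simp only [spMap, essObj, Iso.trans_hom, Iso.symm_hom, Iso.app_hom, asIso_hom, asIso_inv,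
    Functor.mapIso_hom, eqToIso.hom, Functor.map_comp, Category.assoc]
  rw [← cancel_mono (OmC.map ((iterStr X N (m+1)).hom))]
  simp only [Category.assoc]
  rw [← OmC.map_comp ((iterStr X N (m+1)).inv) ((iterStr X N (m+1)).hom), Iso.inv_hom_id,
    OmC.map_id]
  simp only [Functor.id_obj, Category.comp_id]
  have sX := iterStr_shift X N m
  have eX : (iterStr X (N+1) m).hom = (iterStr X N m).hom ≫
      (iterFunctor OmC N).map ((X.str (m+N)).hom) ≫
        (iterComm OmC N).hom.app (X.pt (m+N+1)) := by simp [iterStr]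
  rw [eX] at sX
  rw [sX]
  simp only [Category.assoc, Iso.inv_hom_id_assoc]
  rw [eqToHom_map R]
  have fam2 : ∀ (i i' : ℕ) (h : i = i'),
      eqToHom (congrArg (fun t => R.obj (OmD.obj ((iterFunctor OmD N).obj (L.obj (X.pt t))))) h) ≫
        cR.hom.app ((iterFunctor OmD N).obj (L.obj (X.pt i'))) ≫
          OmC.map ((cIter OmC OmD R cR N).hom.app (L.obj (X.pt i'))) ≫
            OmC.map (inv ((iterFunctor OmC N).map (adj.unit.app (X.pt i')))) =
      cR.hom.app ((iterFunctor OmD N).obj (L.obj (X.pt i))) ≫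
        OmC.map ((cIter OmC OmD R cR N).hom.app (L.obj (X.pt i))) ≫
          OmC.map (inv ((iterFunctor OmC N).map (adj.unit.app (X.pt i)))) ≫
            eqToHom (congrArg (fun t => OmC.obj ((iterFunctor OmC N).obj (X.pt t))) h) := by
    intro i i' h
    subst h
    simp
  have hcore := core OmC OmD L R adj cR N hη X (m+N)
  calc (cIter OmC OmD R cR N).hom.app (L.obj (X.pt (m+N))) ≫
        inv ((iterFunctor OmC N).map (adj.unit.app (X.pt (m+N)))) ≫
          (iterFunctor OmC N).map ((X.str (m+N)).hom) ≫
            (iterComm OmC N).hom.app (X.pt (m+N+1)) ≫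
              eqToHom (congrArg (fun t => OmC.obj ((iterFunctor OmC N).obj (X.pt t)))
                (show m+N+1 = m+1+N by omega))
      = ((cIter OmC OmD R cR N).hom.app (L.obj (X.pt (m+N))) ≫
          inv ((iterFunctor OmC N).map (adj.unit.app (X.pt (m+N)))) ≫
            (iterFunctor OmC N).map ((X.str (m+N)).hom) ≫
              (iterComm OmC N).hom.app (X.pt (m+N+1))) ≫
                eqToHom (congrArg (fun t => OmC.obj ((iterFunctor OmC N).obj (X.pt t)))
                  (show m+N+1 = m+1+N by omega)) := by
        simp only [Category.assoc]
    _ = (R.map ((iterFunctor OmD N).map (L.map ((X.str (m+N)).hom))) ≫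
          R.map ((iterFunctor OmD N).map (gam OmC OmD L R adj cR (X.pt (m+N+1)))) ≫
            R.map ((iterComm OmD N).hom.app (L.obj (X.pt (m+N+1)))) ≫
              cR.hom.app ((iterFunctor OmD N).obj (L.obj (X.pt (m+N+1)))) ≫
                OmC.map ((cIter OmC OmD R cR N).hom.app (L.obj (X.pt (m+N+1)))) ≫
                  OmC.map (inv ((iterFunctor OmC N).map (adj.unit.app (X.pt (m+N+1)))))) ≫
                eqToHom (congrArg (fun t => OmC.obj ((iterFunctor OmC N).obj (X.pt t)))
                  (show m+N+1 = m+1+N by omega)) := by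
        rw [hcore]
    _ = R.map ((iterFunctor OmD N).map (L.map ((X.str (m+N)).hom))) ≫
          R.map ((iterFunctor OmD N).map (gam OmC OmD L R adj cR (X.pt (m+N+1)))) ≫
            R.map ((iterComm OmD N).hom.app (L.obj (X.pt (m+N+1)))) ≫
              eqToHom (congrArg (fun t =>
                  R.obj (OmD.obj ((iterFunctor OmD N).obj (L.obj (X.pt t)))))
                (show m+N+1 = m+1+N by omega)) ≫
                cR.hom.app ((iterFunctor OmD N).obj (L.obj (X.pt (m+1+N)))) ≫
                  OmC.map ((cIter OmC OmD R cR N).hom.app (L.obj (X.pt (m+1+N)))) ≫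
                    OmC.map (inv ((iterFunctor OmC N).map (adj.unit.app (X.pt (m+1+N))))) := by
        rw [fam2 (m+N+1) (m+1+N) (show m+N+1 = m+1+N by omega)]
        simp only [Category.assoc]

end Main
/-- Let `L : C ⇄ D : R` be an adjunction between pointed categories with finite
limits, with loop functors `ΩC`, `ΩD` (with which the right adjoint `R` commutes, via `cR`),
such that for some `n` both `Ωⁿ(unit)` and `Ωⁿ(counit)` are equivalences.  Then the induced
functor on stabilizations `Sp(R) : Sp(D) → Sp(C)` is an equivalence. -/
theorem stmt5 {C D : Type*} [Category C] [Category D]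
    [HasZeroObject C] [HasZeroObject D] [HasFiniteLimits C] [HasFiniteLimits D]
    (OmC : C ⥤ C) (OmD : D ⥤ D)
    (L : C ⥤ D) (R : D ⥤ C) (adj : L ⊣ R) (cR : OmD ⋙ R ≅ R ⋙ OmC) (n : ℕ)
    (hunit : ∀ X : C, IsIso ((iterFunctor OmC n).map (adj.unit.app X)))
    (hcounit : ∀ Y : D, IsIso ((iterFunctor OmD n).map (adj.counit.app Y))) :
    (spMap OmC OmD R cR).IsEquivalence := by
  have hηN : ∀ X : C, IsIso ((iterFunctor OmC (n+n)).map (adj.unit.app X)) := fun X =>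
    isIso_iter_map_add OmC n n _ (hunit X)
  have hεN : ∀ Y : D, IsIso ((iterFunctor OmD (n+n)).map (adj.counit.app Y)) := fun Y =>
    isIso_iter_map_add OmD n n _ (hcounit Y)
  have hγN : ∀ Z : C, IsIso ((iterFunctor OmD (n+n)).map (gam OmC OmD L R adj cR Z)) :=
    isIso_iter_gam OmC OmD L R adj cR n hunit hcounit
  exact ⟨spMap_faithful OmC OmD L R adj cR (n+n) hεN,
    spMap_full OmC OmD L R adj cR (n+n) hηN hεN,
    spMap_essSurj OmC OmD L R adj cR (n+n) hηN hγN⟩
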